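/- For every positive integer n, the number of even-zeroed paths of length 4n equals 16 times the number of even-zeroed paths of length 4(n−1) minus 8 times the number of even-zeroed paths of length 4(n−1) + 1 whose total sum of steps equals 1. -/

import Mathlib

/-- A path of length `l` is a sequence of `l` steps, each `+1` (up, `true`) or `-1`
(down, `false`). `psum p k` is the partial sum of the first `k` steps of `p`
(the height of the path after `k` steps). -/
def psum {l : ℕ} (p : Fin l → Bool) (k : ℕ) : ℤ :=
  ∑ i ∈ Finset.univ.filter (fun i : Fin l => (i : ℕ) < k), (if p i then (1 : ℤ) else -1)

/-- A path is even-zeroed if every index at which its partial sum is `0`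
(i.e., every `x`-intercept) is divisible by `4`. -/
def IsEvenZeroed {l : ℕ} (p : Fin l → Bool) : Prop :=
  ∀ k ≤ l, psum p k = 0 → 4 ∣ k

/-- A path of length `2m` is balanced if its total sum of steps is `0`
(equivalently, it has `m` up-steps and `m` down-steps). -/
def IsBalanced {l : ℕ} (p : Fin l → Bool) : Prop :=
  psum p l = 0

/-! ### Auxiliary lemmas about `psum` -/

lemma psum_zero {l : ℕ} (p : Fin l → Bool) : psum p 0 = 0 := by simp [psum]

lemma psum_succ {l : ℕ} (p : Fin l → Bool) {k : ℕ} (hk : k < l) :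
    psum p (k + 1) = psum p k + (if p ⟨k, hk⟩ then 1 else -1) := by
  unfold psum
  have h : (Finset.univ.filter fun i : Fin l => (i : ℕ) < k + 1)
      = insert (⟨k, hk⟩ : Fin l) (Finset.univ.filter fun i : Fin l => (i : ℕ) < k) := by
    ext i
    simp only [Finset.mem_filter, Finset.mem_univ, true_and, Finset.mem_insert, Fin.ext_iff]
    omega
  rw [h, Finset.sum_insert (by simp)]
  ring

lemma psum_parity {l : ℕ} (p : Fin l → Bool) :
    ∀ k, k ≤ l → (2 : ℤ) ∣ psum p k - k := by
  intro k
  induction k with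
  | zero => intro _; simp [psum_zero]
  | succ k ih =>
    intro hk
    have hkl : k < l := hk
    rw [psum_succ p hkl]
    have h2 := ih (le_of_lt hkl)
    have h3 : (2:ℤ) ∣ ((if p ⟨k,hkl⟩ then (1:ℤ) else -1) - 1) := by
      cases p ⟨k, hkl⟩ <;> norm_num
    have h4 := dvd_add h2 h3
    convert h4 using 1
    · rfl
    push_cast
    ring

lemma psum_ne_zero_of_odd {l : ℕ} (p : Fin l → Bool) {k : ℕ} (hk : k ≤ l)
    (hodd : k % 2 = 1) : psum p k ≠ 0 := by
  intro h0
  have h := psum_parity p k hk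
  rw [h0] at h
  omega

lemma psum_neg {l : ℕ} (p : Fin l → Bool) (k : ℕ) :
    psum (fun i => !(p i)) k = -psum p k := by
  unfold psum
  rw [← Finset.sum_neg_distrib]
  apply Finset.sum_congr rfl
  intro i _
  cases h : p i <;> simp [h]

/-! ### Appending paths -/

def appE (a b : ℕ) : ((Fin a → Bool) × (Fin b → Bool)) ≃ (Fin (a + b) → Bool) :=
  (Equiv.sumArrowEquivProdArrow (Fin a) (Fin b) Bool).symm.trans
    (Equiv.arrowCongr finSumFinEquiv (Equiv.refl Bool))

lemma appE_left {a b : ℕ} (q : Fin a → Bool) (r : Fin b → Bool) (i : Fin a) :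
    appE a b (q, r) (Fin.castAdd b i) = q i := by
  simp [appE, Equiv.sumArrowEquivProdArrow, Equiv.arrowCongr]

lemma appE_right {a b : ℕ} (q : Fin a → Bool) (r : Fin b → Bool) (j : Fin b) :
    appE a b (q, r) (Fin.natAdd a j) = r j := by
  simp [appE, Equiv.sumArrowEquivProdArrow, Equiv.arrowCongr]

lemma psum_appE_left {a b : ℕ} (q : Fin a → Bool) (r : Fin b → Bool) :
    ∀ k, k ≤ a → psum (appE a b (q, r)) k = psum q k := by
  intro k
  induction k with
  | zero => intro _; rw [psum_zero, psum_zero]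
  | succ k ih =>
    intro hk
    have hka : k < a := hk
    have hkab : k < a + b := by omega
    rw [psum_succ _ hkab, psum_succ _ hka, ih (le_of_lt hka)]
    congr 1
    have h : (⟨k, hkab⟩ : Fin (a + b)) = Fin.castAdd b ⟨k, hka⟩ := rfl
    rw [h, appE_left]

lemma psum_appE_add {a b : ℕ} (q : Fin a → Bool) (r : Fin b → Bool) :
    ∀ j, j ≤ b → psum (appE a b (q, r)) (a + j) = psum q a + psum r j := by
  intro j
  induction j with
  | zero => intro _; rw [psum_zero, Nat.add_zero, psum_appE_left q r a le_rfl, add_zero]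
  | succ j ih =>
    intro hj
    have hjb : j < b := hj
    have hab : a + j < a + b := by omega
    have e1 : a + (j + 1) = (a + j) + 1 := rfl
    rw [e1, psum_succ _ hab, ih (le_of_lt hjb), psum_succ _ hjb, add_assoc]
    congr 2
    have h : (⟨a + j, hab⟩ : Fin (a + b)) = Fin.natAdd a ⟨j, hjb⟩ := rfl
    rw [h, appE_right]

/-! ### Cardinality equivalences -/

def eqFst {α β : Type*} (P : α → Prop) : {x : α × β // P x.1} ≃ {a // P a} × β where
  toFun x := (⟨x.1.1, x.2⟩, x.1.2)
  invFun y := ⟨(y.1.1, y.2), y.1.2⟩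
  left_inv _ := rfl
  right_inv _ := rfl

def eqBool {α : Type*} (P : α → Bool → Prop) :
    {x : α × Bool // P x.1 x.2} ≃ {a // P a false} ⊕ {a // P a true} where
  toFun x :=
    if h : x.1.2 = true then Sum.inr ⟨x.1.1, by have h2 := x.2; rwa [h] at h2⟩
    else Sum.inl ⟨x.1.1, by
      have h2 := x.2
      have h' : x.1.2 = false := by simpa using h
      rwa [h'] at h2⟩
  invFun := Sum.elim (fun a => ⟨(a.1, false), a.2⟩) (fun a => ⟨(a.1, true), a.2⟩)
  left_inv := by rintro ⟨⟨a, b⟩, h⟩; cases b <;> simp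
  right_inv := by rintro (a | a) <;> simp

def fin1Bool : (Fin 1 → Bool) ≃ Bool where
  toFun u := u ⟨0, Nat.zero_lt_one⟩
  invFun b := fun _ => b
  left_inv u := by
    funext i
    have h : i = ⟨0, Nat.zero_lt_one⟩ := Subsingleton.elim i _
    rw [h]
  right_inv b := rfl

def negE (l : ℕ) : (Fin l → Bool) ≃ (Fin l → Bool) where
  toFun p := fun i => !(p i)
  invFun p := fun i => !(p i)
  left_inv p := by funext i; simp
  right_inv p := by funext i; simp

lemma psum_negE {l : ℕ} (r : Fin l → Bool) (k : ℕ) :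
    psum ((negE l) r) k = -psum r k := psum_neg r k

/-! ### Structure lemmas -/

lemma ez_pre_iff (m : ℕ) (r : Fin (4*m+1) → Bool) :
    IsEvenZeroed r ↔ ∀ k ≤ 4*m, psum r k = 0 → 4 ∣ k := by
  constructor
  · intro h k hk; exact h k (by omega)
  · intro h k hk h0
    rcases Nat.lt_or_ge k (4*m+1) with hlt | hge
    · exact h k (by omega) h0
    · have hk1 : k = 4*m+1 := by omega
      subst hk1
      exact absurd h0 (psum_ne_zero_of_odd r le_rfl (by omega))

lemma evenZeroed_iff (m : ℕ) (p : Fin (4*m+4) → Bool) :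
    IsEvenZeroed p ↔ (∀ k ≤ 4*m, psum p k = 0 → 4 ∣ k) ∧ ¬ (psum p (4*m+2) = 0) := by
  constructor
  · intro h
    refine ⟨fun k hk => h k (by omega), fun h0 => ?_⟩
    have := h (4*m+2) (by omega) h0
    omega
  · rintro ⟨h1, h2⟩ k hk h0
    rcases Nat.lt_or_ge k (4*m+1) with hlt | hge
    · exact h1 k (by omega) h0
    · have : k = 4*m+1 ∨ k = 4*m+2 ∨ k = 4*m+3 ∨ k = 4*m+4 := by omega
      rcases this with rfl | rfl | rfl | rfl
      · exact absurd h0 (psum_ne_zero_of_odd p (by omega) (by omega))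
      · exact absurd h0 h2
      · exact absurd h0 (psum_ne_zero_of_odd p (by omega) (by omega))
      · omega

/-! ### Counting lemmas -/

lemma count_pre (m : ℕ) :
    Nat.card {p : Fin (4*m+4) → Bool // ∀ k ≤ 4*m, psum p k = 0 → 4 ∣ k}
      = Nat.card {q : Fin (4*m) → Bool // IsEvenZeroed q} * 16 := by
  have h : ∀ x : (Fin (4*m) → Bool) × (Fin 4 → Bool),
      IsEvenZeroed x.1 ↔ ∀ k ≤ 4*m, psum (appE (4*m) 4 x) k = 0 → 4 ∣ k := by
    rintro ⟨q, r⟩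
    constructor
    · intro h k hk h0
      exact h k hk (by rwa [psum_appE_left q r k hk] at h0)
    · intro h k hk h0
      exact h k hk (by rwa [psum_appE_left q r k hk])
  have e1 : {x : (Fin (4*m) → Bool) × (Fin 4 → Bool) // IsEvenZeroed x.1}
      ≃ {p : Fin (4*m+4) → Bool // ∀ k ≤ 4*m, psum p k = 0 → 4 ∣ k} :=
    Equiv.subtypeEquiv (appE (4*m) 4) h
  rw [← Nat.card_congr e1, Nat.card_congr (eqFst _), Nat.card_prod]
  simp [Nat.card_eq_fintype_card]

lemma count_bad (m : ℕ) :
    Nat.card {p : Fin (4*m+4) → Bool //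
        (∀ k ≤ 4*m, psum p k = 0 → 4 ∣ k) ∧ psum p (4*m+2) = 0}
      = Nat.card {r : Fin (4*m+1) → Bool // IsEvenZeroed r ∧ psum r (4*m+1) = 1} * 8 := by
  -- Step 1: peel off the last two steps.
  have h1 : ∀ x : (Fin (4*m+2) → Bool) × (Fin 2 → Bool),
      ((∀ k ≤ 4*m, psum x.1 k = 0 → 4 ∣ k) ∧ psum x.1 (4*m+2) = 0)
        ↔ ((∀ k ≤ 4*m, psum (appE (4*m+2) 2 x) k = 0 → 4 ∣ k)
            ∧ psum (appE (4*m+2) 2 x) (4*m+2) = 0) := by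
    rintro ⟨s, t⟩
    have hps : ∀ k, k ≤ 4*m+2 → psum (appE (4*m+2) 2 (s, t)) k = psum s k :=
      psum_appE_left s t
    constructor
    · rintro ⟨hA, hB⟩
      exact ⟨fun k hk h0 => hA k hk (by rwa [hps k (by omega)] at h0),
        by rw [hps (4*m+2) le_rfl]; exact hB⟩
    · rintro ⟨hA, hB⟩
      exact ⟨fun k hk h0 => hA k hk (by rwa [hps k (by omega)]),
        by rwa [hps (4*m+2) le_rfl] at hB⟩
  have e1 : {x : (Fin (4*m+2) → Bool) × (Fin 2 → Bool) //
        (∀ k ≤ 4*m, psum x.1 k = 0 → 4 ∣ k) ∧ psum x.1 (4*m+2) = 0}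
      ≃ {p : Fin (4*m+4) → Bool //
        (∀ k ≤ 4*m, psum p k = 0 → 4 ∣ k) ∧ psum p (4*m+2) = 0} :=
    Equiv.subtypeEquiv (appE (4*m+2) 2) h1
  rw [← Nat.card_congr e1, Nat.card_congr (eqFst (fun s : Fin (4*m+2) → Bool =>
    (∀ k ≤ 4*m, psum s k = 0 → 4 ∣ k) ∧ psum s (4*m+2) = 0)), Nat.card_prod]
  -- Step 2: peel off the (4m+2)-nd step.
  have h2 : ∀ y : (Fin (4*m+1) → Bool) × (Fin 1 → Bool),
      (IsEvenZeroed y.1 ∧ psum y.1 (4*m+1) + (if y.2 ⟨0, Nat.zero_lt_one⟩ then (1:ℤ) else -1) = 0)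
        ↔ ((∀ k ≤ 4*m, psum (appE (4*m+1) 1 y) k = 0 → 4 ∣ k)
            ∧ psum (appE (4*m+1) 1 y) (4*m+2) = 0) := by
    rintro ⟨r, u⟩
    have hps : ∀ k, k ≤ 4*m+1 → psum (appE (4*m+1) 1 (r, u)) k = psum r k :=
      psum_appE_left r u
    have hlast : psum (appE (4*m+1) 1 (r, u)) (4*m+2) = psum r (4*m+1) + psum u 1 :=
      psum_appE_add r u 1 le_rfl
    have hu : psum u 1 = (if u ⟨0, Nat.zero_lt_one⟩ then (1:ℤ) else -1) := by
      rw [psum_succ u Nat.zero_lt_one, psum_zero, zero_add]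
    rw [hlast, hu]
    constructor
    · rintro ⟨hA, hB⟩
      refine ⟨fun k hk h0 => ?_, hB⟩
      exact ((ez_pre_iff m r).1 hA) k hk (by rwa [hps k (by omega)] at h0)
    · rintro ⟨hA, hB⟩
      refine ⟨(ez_pre_iff m r).2 fun k hk h0 => ?_, hB⟩
      exact hA k hk (by rwa [hps k (by omega)])
  have e2 : {y : (Fin (4*m+1) → Bool) × (Fin 1 → Bool) //
        IsEvenZeroed y.1 ∧ psum y.1 (4*m+1) + (if y.2 ⟨0, Nat.zero_lt_one⟩ then (1:ℤ) else -1) = 0}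
      ≃ {s : Fin (4*m+2) → Bool //
        (∀ k ≤ 4*m, psum s k = 0 → 4 ∣ k) ∧ psum s (4*m+2) = 0} :=
    Equiv.subtypeEquiv (appE (4*m+1) 1) h2
  rw [← Nat.card_congr e2]
  -- Step 3: the single extra step is a Bool.
  have e3 : {y : (Fin (4*m+1) → Bool) × (Fin 1 → Bool) //
        IsEvenZeroed y.1 ∧ psum y.1 (4*m+1) + (if y.2 ⟨0, Nat.zero_lt_one⟩ then (1:ℤ) else -1) = 0}
      ≃ {z : (Fin (4*m+1) → Bool) × Bool //
        IsEvenZeroed z.1 ∧ psum z.1 (4*m+1) + (if z.2 then (1:ℤ) else -1) = 0} :=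
    Equiv.subtypeEquiv (Equiv.prodCongr (Equiv.refl _) fin1Bool) (fun y => Iff.rfl)
  rw [Nat.card_congr e3,
    Nat.card_congr (eqBool (fun (r : Fin (4*m+1) → Bool) (b : Bool) =>
      IsEvenZeroed r ∧ psum r (4*m+1) + (if b then (1:ℤ) else -1) = 0)),
    Nat.card_sum]
  -- Step 4: identify the two summands.
  have e4 : {r : Fin (4*m+1) → Bool //
        IsEvenZeroed r ∧ psum r (4*m+1) + (if false then (1:ℤ) else -1) = 0}
      ≃ {r : Fin (4*m+1) → Bool // IsEvenZeroed r ∧ psum r (4*m+1) = 1} :=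
    Equiv.subtypeEquivRight (fun r => by
      constructor
      · rintro ⟨hA, hB⟩; exact ⟨hA, by simp at hB; omega⟩
      · rintro ⟨hA, hB⟩; exact ⟨hA, by simp; omega⟩)
  have e5 : {r : Fin (4*m+1) → Bool //
        IsEvenZeroed r ∧ psum r (4*m+1) + (if true then (1:ℤ) else -1) = 0}
      ≃ {r : Fin (4*m+1) → Bool // IsEvenZeroed r ∧ psum r (4*m+1) = 1} := by
    refine Equiv.subtypeEquiv (negE (4*m+1)) (fun r => ?_)
    constructor
    · rintro ⟨hA, hB⟩
      refine ⟨fun k hk h0 => hA k hk ?_, ?_⟩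
      · rw [psum_negE] at h0; omega
      · rw [psum_negE]; simp at hB; omega
    · rintro ⟨hA, hB⟩
      refine ⟨fun k hk h0 => hA k hk ?_, ?_⟩
      · rw [psum_negE]; omega
      · rw [psum_negE] at hB; simp; omega
  rw [Nat.card_congr e4, Nat.card_congr e5]
  have : Nat.card (Fin 2 → Bool) = 4 := by simp [Nat.card_eq_fintype_card]
  rw [this]
  ring

lemma count_split (m : ℕ) :
    Nat.card {p : Fin (4*m+4) → Bool // ∀ k ≤ 4*m, psum p k = 0 → 4 ∣ k}
      = Nat.card {p : Fin (4*m+4) → Bool //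
            (∀ k ≤ 4*m, psum p k = 0 → 4 ∣ k) ∧ psum p (4*m+2) = 0}
        + Nat.card {p : Fin (4*m+4) → Bool // IsEvenZeroed p} := by
  classical
  rw [← Nat.card_congr (Equiv.sumCompl
      (fun x : {p : Fin (4*m+4) → Bool // ∀ k ≤ 4*m, psum p k = 0 → 4 ∣ k} =>
        psum x.1 (4*m+2) = 0)),
    Nat.card_sum,
    Nat.card_congr (Equiv.subtypeSubtypeEquivSubtypeInter
      (fun p : Fin (4*m+4) → Bool => ∀ k ≤ 4*m, psum p k = 0 → 4 ∣ k)
      (fun p => psum p (4*m+2) = 0)),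
    Nat.card_congr ((Equiv.subtypeSubtypeEquivSubtypeInter
      (fun p : Fin (4*m+4) → Bool => ∀ k ≤ 4*m, psum p k = 0 → 4 ∣ k)
      (fun p => ¬ psum p (4*m+2) = 0)).trans
      (Equiv.subtypeEquivRight (fun p => (evenZeroed_iff m p).symm)))]

/-- For every positive integer `n`, the number of even-zeroed paths of length `4n` equals
`16` times the number of even-zeroed paths of length `4(n−1)` minus `8` times the number
of even-zeroed paths of length `4(n−1) + 1` with total sum of steps equal to `1`. -/
theorem card_evenZeroed_recursion (n : ℕ) (hn : 0 < n) :
    (Nat.card {p : Fin (4 * n) → Bool // IsEvenZeroed p} : ℤ) =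
      16 * Nat.card {p : Fin (4 * (n - 1)) → Bool // IsEvenZeroed p} -
        8 * Nat.card {p : Fin (4 * (n - 1) + 1) → Bool //
          IsEvenZeroed p ∧ psum p (4 * (n - 1) + 1) = 1} := by
  obtain ⟨m, rfl⟩ : ∃ m, n = m + 1 := ⟨n - 1, by omega⟩
  rw [Nat.add_sub_cancel]
  have h1 := count_pre m
  have h2 := count_bad m
  have h3 := count_split m
  show (Nat.card {p : Fin (4*m+4) → Bool // IsEvenZeroed p} : ℤ) = _
  omega
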